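/- arXiv:math-ph/0302049 — 3 statements merged into one kernel-verified Lean document; each statement's English description precedes it below -/
import Mathlib

section
/- Translation boundedness of the dense Dirac comb: assume a cut-and-project scheme where both π₁|_{L̃} and π₂|_{L̃} are injective and both images are dense. Let f : ℝ^m → ℂ be bounded with |x|^{m+1+α}|f(x)| ≤ C for constants C, α > 0. Then ω = ∑_{x ∈ L} f(x*) δ_x defines a translation-bounded complex Borel measure on ℝ^d: for every compact K ⊂ ℝ^d, sup_{y ∈ ℝ^d} |ω|(y + K) < ∞. -/
open MeasureTheory Metric

/-- The projection of the lattice to direct space. -/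
def physL (d m : ℕ) (L : Submodule ℤ (EuclideanSpace ℝ (Fin d) × EuclideanSpace ℝ (Fin m))) :
    Set (EuclideanSpace ℝ (Fin d)) :=
  Prod.fst '' (L : Set (EuclideanSpace ℝ (Fin d) × EuclideanSpace ℝ (Fin m)))

/-- the dense weighted Dirac comb ω = ∑_{x∈L} f(x*) δ_x is a translation
bounded measure: over every translate of a compact set, the total variation
|ω|(y+K) = ∑_{x ∈ L ∩ (y+K)} ‖f(x*)‖ is finite, uniformly in y. -/
theorem dense_dirac_comb_translation_bounded (d m : ℕ)
    (L : Submodule ℤ (EuclideanSpace ℝ (Fin d) × EuclideanSpace ℝ (Fin m)))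
    [DiscreteTopology L] [IsZLattice ℝ L]
    (hinj1 : Set.InjOn Prod.fst (L : Set (EuclideanSpace ℝ (Fin d) × EuclideanSpace ℝ (Fin m))))
    (hdense1 : Dense (physL d m L))
    (hinj2 : Set.InjOn Prod.snd (L : Set (EuclideanSpace ℝ (Fin d) × EuclideanSpace ℝ (Fin m))))
    (hdense2 : Dense (Prod.snd '' (L : Set (EuclideanSpace ℝ (Fin d) × EuclideanSpace ℝ (Fin m)))))
    (star : EuclideanSpace ℝ (Fin d) → EuclideanSpace ℝ (Fin m))
    (hstar : ∀ p ∈ L, star (Prod.fst p) = Prod.snd p)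
    (f : EuclideanSpace ℝ (Fin m) → ℂ) (M : ℝ) (hM : ∀ x, ‖f x‖ ≤ M)
    (C α : ℝ) (hC : 0 < C) (hα : 0 < α)
    (hdecay : ∀ x : EuclideanSpace ℝ (Fin m), ‖x‖ ^ ((m : ℝ) + 1 + α) * ‖f x‖ ≤ C) :
    ∀ K : Set (EuclideanSpace ℝ (Fin d)), IsCompact K →
    ∃ B : ℝ, ∀ y : EuclideanSpace ℝ (Fin d),
      (Summable fun x : ((physL d m L ∩ {z | z - y ∈ K} : Set (EuclideanSpace ℝ (Fin d)))) =>
        ‖f (star (x : EuclideanSpace ℝ (Fin d)))‖) ∧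
      (∑' x : ((physL d m L ∩ {z | z - y ∈ K} : Set (EuclideanSpace ℝ (Fin d)))),
        ‖f (star (x : EuclideanSpace ℝ (Fin d)))‖) ≤ B := by
  classical
  intro K hK
  -- separation of the lattice
  obtain ⟨ε, hε, hLsep⟩ :
      ∃ ε > 0, ∀ p ∈ L, ‖p‖ < ε → p = 0 := by
    have h0 : IsOpen ({0} : Set L) := isOpen_discrete _
    rw [isOpen_induced_iff] at h0
    obtain ⟨U, hUopen, hU0⟩ := h0
    have h0U : (0 : EuclideanSpace ℝ (Fin d) × EuclideanSpace ℝ (Fin m)) ∈ U := by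
      have h : (0 : L) ∈ (Subtype.val ⁻¹' U : Set L) := by rw [hU0]; rfl
      exact h
    obtain ⟨ε, hε, hball⟩ := Metric.isOpen_iff.1 hUopen 0 h0U
    refine ⟨ε, hε, fun p hp hnorm => ?_⟩
    have hmem : (⟨p, hp⟩ : L) ∈ (Subtype.val ⁻¹' U : Set L) :=
      hball (by simpa [Metric.mem_ball, dist_zero_right] using hnorm)
    rw [hU0] at hmem
    simpa using congrArg Subtype.val hmem
  have hsep : ∀ p ∈ L, ∀ q ∈ L, p ≠ q → ε ≤ dist p q := by
    intro p hp q hq hne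
    by_contra h
    push_neg at h
    have hmem : p - q ∈ L := sub_mem hp hq
    have hz : p - q = 0 := hLsep _ hmem (by rwa [← dist_eq_norm])
    exact hne (sub_eq_zero.mp hz)
  -- radius of K
  obtain ⟨R₀, hR₀⟩ := hK.isBounded.subset_closedBall 0
  set R := max R₀ 0 with hRdef
  have hKR : K ⊆ closedBall 0 R := hR₀.trans (closedBall_subset_closedBall (le_max_left _ _))
  have hR0 : (0:ℝ) ≤ R := le_max_right _ _
  -- small radius r
  set r := min (ε/3) 1 with hrdef
  have hr0 : 0 < r := lt_min (by linarith) one_pos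
  have hr1 : r ≤ 1 := min_le_right _ _
  have h2r : r + r < ε := by
    have : r ≤ ε/3 := min_le_left _ _
    linarith
  -- the dominating radial function
  set s : ℝ := (m : ℝ) + 1 + α with hsdef
  have hspos : (0:ℝ) < s := by positivity
  have hMC : (0:ℝ) < max M C := lt_of_lt_of_le hC (le_max_right _ _)
  set C'' : ℝ := (max M C) * 3 ^ s with hCdef
  set H : EuclideanSpace ℝ (Fin m) → ℝ := fun z => C'' * (1 + ‖z‖) ^ (-s) with hHdef
  have hH0 : ∀ z, 0 ≤ H z := fun z =>
    mul_nonneg (mul_nonneg hMC.le (Real.rpow_nonneg (by norm_num) _))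
      (Real.rpow_nonneg (by positivity) _)
  -- key pointwise bound
  have hHkey : ∀ p q : EuclideanSpace ℝ (Fin d) × EuclideanSpace ℝ (Fin m),
      dist q p ≤ r → ‖f p.2‖ ≤ H q.2 := by
    intro p q hqp
    have hq2 : ‖q.2‖ ≤ ‖p.2‖ + 1 := by
      have h1 : ‖q.2‖ - ‖p.2‖ ≤ dist q.2 p.2 := by
        rw [dist_eq_norm]; exact norm_sub_norm_le _ _
      have h2 : dist q.2 p.2 ≤ dist q p := by
        rw [Prod.dist_eq]; exact le_max_right _ _
      linarith
    set t := max 1 ‖p.2‖ with htdef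
    have htpos : (0:ℝ) < t := lt_of_lt_of_le one_pos (le_max_left _ _)
    have h1 : (1:ℝ) + ‖q.2‖ ≤ 3 * t := by
      have hA : ‖p.2‖ ≤ t := le_max_right _ _
      have hB : (1:ℝ) ≤ t := le_max_left _ _
      linarith
    have h2 : ‖f p.2‖ * t ^ s ≤ max M C := by
      rcases le_total ‖p.2‖ 1 with h | h
      · have ht1 : t = 1 := max_eq_left h
        rw [ht1, Real.one_rpow, mul_one]
        exact le_trans (hM _) (le_max_left _ _)
      · have ht1 : t = ‖p.2‖ := max_eq_right h
        rw [ht1, mul_comm]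
        exact le_trans (hdecay _) (le_max_right _ _)
    have h3 : (3 * t) ^ (-s) ≤ (1 + ‖q.2‖) ^ (-s) :=
      Real.rpow_le_rpow_of_nonpos (by positivity) h1 (by linarith)
    have h33 : (3:ℝ) ^ s * (3:ℝ) ^ (-s) = 1 := by
      rw [← Real.rpow_add (by norm_num)]; simp
    have key : (max M C) * t ^ (-s) = C'' * (3 * t) ^ (-s) := by
      rw [hCdef, Real.mul_rpow (by norm_num) htpos.le]
      rw [show max M C * 3 ^ s * ((3:ℝ) ^ (-s) * t ^ (-s))
          = max M C * ((3:ℝ) ^ s * (3:ℝ) ^ (-s)) * t ^ (-s) by ring, h33, mul_one]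
    have hts : (0:ℝ) < t ^ s := Real.rpow_pos_of_pos htpos s
    have hstep : ‖f p.2‖ ≤ (max M C) * t ^ (-s) := by
      rw [Real.rpow_neg htpos.le, ← div_eq_mul_inv, le_div_iff₀ hts]
      exact h2
    calc ‖f p.2‖ ≤ (max M C) * t ^ (-s) := hstep
      _ = C'' * (3 * t) ^ (-s) := key
      _ ≤ C'' * (1 + ‖q.2‖) ^ (-s) := by
          apply mul_le_mul_of_nonneg_left h3
          exact mul_nonneg hMC.le (Real.rpow_nonneg (by norm_num) _)
      _ = H q.2 := rfl
  -- integrability of H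
  have hms : (Module.finrank ℝ (EuclideanSpace ℝ (Fin m)) : ℝ) < s := by
    rw [finrank_euclideanSpace_fin, hsdef]
    linarith
  have hint : Integrable H := by
    have h := integrable_one_add_norm
      (E := EuclideanSpace ℝ (Fin m)) (μ := volume) hms
    exact h.const_mul C''
  set I : ℝ := ∫ z, H z with hIdef
  have hI0 : 0 ≤ I := integral_nonneg hH0
  -- product volume is a Haar measure
  haveI hHaarProd :
      (volume : Measure (EuclideanSpace ℝ (Fin d) × EuclideanSpace ℝ (Fin m))).IsAddHaarMeasure := by
    rw [MeasureTheory.Measure.volume_eq_prod]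
    exact Measure.prod.instIsAddHaarMeasure _ _
  set v : ℝ := (volume (closedBall
      (0 : EuclideanSpace ℝ (Fin d) × EuclideanSpace ℝ (Fin m)) r)).toReal with hvdef
  have hvpos : 0 < v := by
    have h1 : 0 < volume (closedBall
        (0 : EuclideanSpace ℝ (Fin d) × EuclideanSpace ℝ (Fin m)) r) :=
      lt_of_lt_of_le (measure_ball_pos _ _ hr0) (measure_mono ball_subset_closedBall)
    have h2 : volume (closedBall
        (0 : EuclideanSpace ℝ (Fin d) × EuclideanSpace ℝ (Fin m)) r) ≠ ⊤ :=
      measure_closedBall_lt_top.ne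
    exact ENNReal.toReal_pos h1.ne' h2
  set VR : ℝ := (volume (closedBall (0 : EuclideanSpace ℝ (Fin d)) (R + r))).toReal with hVRdef
  refine ⟨VR * I / v, fun y => ?_⟩
  -- the main finite-sum bound
  have main : ∀ T : Finset ((physL d m L ∩ {z | z - y ∈ K} : Set (EuclideanSpace ℝ (Fin d)))),
      ∑ x ∈ T, ‖f (star (x : EuclideanSpace ℝ (Fin d)))‖ ≤ VR * I / v := by
    intro T
    have hx : ∀ x : ((physL d m L ∩ {z | z - y ∈ K} : Set (EuclideanSpace ℝ (Fin d)))),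
        ∃ p, p ∈ (L : Set (EuclideanSpace ℝ (Fin d) × EuclideanSpace ℝ (Fin m))) ∧
          Prod.fst p = (x : EuclideanSpace ℝ (Fin d)) := fun x => by
      obtain ⟨p, hp1, hp2⟩ := x.2.1
      exact ⟨p, hp1, hp2⟩
    choose g hgL hgfst using hx
    have hgval : ∀ x : ((physL d m L ∩ {z | z - y ∈ K} : Set (EuclideanSpace ℝ (Fin d)))),
        ‖f (star (x : EuclideanSpace ℝ (Fin d)))‖ = ‖f (g x).2‖ := fun x => by
      rw [← hgfst x, hstar _ (hgL x)]
    have hginj : Function.Injective g := by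
      intro a b hab
      have h := congrArg Prod.fst hab
      rw [hgfst a, hgfst b] at h
      exact Subtype.ext h
    set tb : _ → Set (EuclideanSpace ℝ (Fin d) × EuclideanSpace ℝ (Fin m)) :=
      fun x => closedBall (g x) r with htbdef
    have hdisj : (↑T : Set _).Pairwise (Function.onFun Disjoint tb) := by
      intro a _ b _ hab
      have hgne : g a ≠ g b := fun h => hab (hginj h)
      have hd : ε ≤ dist (g a) (g b) := hsep _ (hgL a) _ (hgL b) hgne
      exact closedBall_disjoint_closedBall (lt_of_lt_of_le h2r hd)
    set S : Set (EuclideanSpace ℝ (Fin d) × EuclideanSpace ℝ (Fin m)) :=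
      closedBall y (R + r) ×ˢ Set.univ with hSdef
    have hsub : ∀ x, tb x ⊆ S := by
      intro x q hq
      refine ⟨?_, Set.mem_univ _⟩
      have h1 : dist q.1 (g x).1 ≤ r := by
        refine le_trans ?_ (mem_closedBall.mp hq)
        rw [Prod.dist_eq]; exact le_max_left _ _
      have h2 : dist (g x).1 y ≤ R := by
        rw [hgfst x]
        have hxK := hKR x.2.2
        simp only [mem_closedBall] at hxK
        rw [dist_eq_norm]
        simpa [dist_eq_norm] using hxK
      exact mem_closedBall.mpr ((dist_triangle q.1 (g x).1 y).trans (by linarith))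
    have hintS : IntegrableOn (fun q : EuclideanSpace ℝ (Fin d) × EuclideanSpace ℝ (Fin m) =>
        H q.2) S := by
      rw [IntegrableOn, hSdef, MeasureTheory.Measure.volume_eq_prod, ← Measure.prod_restrict]
      haveI : IsFiniteMeasure ((volume : Measure (EuclideanSpace ℝ (Fin d))).restrict
          (closedBall y (R + r))) :=
        ⟨by rw [Measure.restrict_apply_univ]; exact measure_closedBall_lt_top⟩
      have h1 : Integrable (fun q : EuclideanSpace ℝ (Fin d) × EuclideanSpace ℝ (Fin m) =>
          (fun _ : EuclideanSpace ℝ (Fin d) => (1:ℝ)) q.1 * H q.2)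
          (((volume : Measure (EuclideanSpace ℝ (Fin d))).restrict (closedBall y (R + r))).prod
            ((volume : Measure (EuclideanSpace ℝ (Fin m))).restrict Set.univ)) := by
        rw [Measure.restrict_univ]
        exact (integrable_const (μ := (volume : Measure (EuclideanSpace ℝ (Fin d))).restrict
          (closedBall y (R + r))) (1:ℝ)).mul_prod hint
      simpa using h1
    have hSval : ∫ q in S, H q.2 = VR * I := by
      rw [hSdef, MeasureTheory.Measure.volume_eq_prod]
      have h := MeasureTheory.setIntegral_prod_mul
        (μ := (volume : Measure (EuclideanSpace ℝ (Fin d))))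
        (ν := (volume : Measure (EuclideanSpace ℝ (Fin m))))
        (fun _ : EuclideanSpace ℝ (Fin d) => (1:ℝ)) H (closedBall y (R + r)) Set.univ
      simp only [one_mul] at h
      rw [h, Measure.restrict_univ, MeasureTheory.setIntegral_const, smul_eq_mul, mul_one,
        measureReal_def, Measure.addHaar_closedBall_center, ← hVRdef, ← hIdef]
    have hball : ∀ x ∈ T, ‖f (star (x : EuclideanSpace ℝ (Fin d)))‖ * v ≤
        ∫ q in tb x, H q.2 := by
      intro x _
      have hInt : IntegrableOn (fun q : EuclideanSpace ℝ (Fin d) × EuclideanSpace ℝ (Fin m) =>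
          H q.2) (tb x) := hintS.mono_set (hsub x)
      have hle : ∫ _ in tb x, ‖f (g x).2‖ ≤ ∫ q in tb x, H q.2 := by
        refine MeasureTheory.setIntegral_mono_on
          (integrableOn_const measure_closedBall_lt_top.ne) hInt
          measurableSet_closedBall (fun q hq => ?_)
        exact hHkey (g x) q (mem_closedBall.mp hq)
      have hvol : volume (tb x) = volume (closedBall
          (0 : EuclideanSpace ℝ (Fin d) × EuclideanSpace ℝ (Fin m)) r) :=
        Measure.addHaar_closedBall_center _ _ _
      rw [hgval x]
      calc ‖f (g x).2‖ * v = (volume (tb x)).toReal * ‖f (g x).2‖ := by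
            rw [hvol, ← hvdef]; ring
        _ = ∫ _ in tb x, ‖f (g x).2‖ := by
            rw [MeasureTheory.setIntegral_const, smul_eq_mul, measureReal_def]
        _ ≤ ∫ q in tb x, H q.2 := hle
    have hsum : (∑ x ∈ T, ‖f (star (x : EuclideanSpace ℝ (Fin d)))‖) * v ≤ VR * I := by
      rw [Finset.sum_mul]
      calc ∑ x ∈ T, ‖f (star (x : EuclideanSpace ℝ (Fin d)))‖ * v
          ≤ ∑ x ∈ T, ∫ q in tb x, H q.2 := Finset.sum_le_sum hball
        _ = ∫ q in ⋃ x ∈ T, tb x, H q.2 :=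
            (MeasureTheory.integral_biUnion_finset T (fun x _ => measurableSet_closedBall)
              hdisj (fun x _ => hintS.mono_set (hsub x))).symm
        _ ≤ ∫ q in S, H q.2 := by
            refine MeasureTheory.setIntegral_mono_set hintS
              (Filter.Eventually.of_forall fun q => hH0 q.2) ?_
            exact HasSubset.Subset.eventuallyLE (Set.iUnion₂_subset fun x _ => hsub x)
        _ = VR * I := hSval
    exact (le_div_iff₀ hvpos).mpr hsum
  have hnn : ∀ x : ((physL d m L ∩ {z | z - y ∈ K} : Set (EuclideanSpace ℝ (Fin d)))),
      0 ≤ ‖f (star (x : EuclideanSpace ℝ (Fin d)))‖ := fun x => norm_nonneg _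
  have hsummable : Summable fun x :
      ((physL d m L ∩ {z | z - y ∈ K} : Set (EuclideanSpace ℝ (Fin d)))) =>
      ‖f (star (x : EuclideanSpace ℝ (Fin d)))‖ :=
    summable_of_sum_le hnn main
  exact ⟨hsummable, Summable.tsum_le_of_sum_le hsummable main⟩
end

section
/- The measure γ_{|ω|} = ∑_{z ∈ L} |η|(z) δ_z, where |η|(z) = (1/|det(L̃)|) ∫_{ℝ^m} |f(u)|·|f(u − z*)| du, is a well-defined (locally finite) measure on ℝ^d: for every compact K ⊂ ℝ^d, ∑_{z ∈ L ∩ K} |η|(z) < ∞. -/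
open MeasureTheory Metric

private lemma inv_le_mul_inv' {u v c : ℝ} (hu : 0 < u) (hv : 0 < v) (h : v ≤ c * u) :
    u⁻¹ ≤ c * v⁻¹ := by
  have hc : 0 ≤ c := by
    by_contra hc
    nlinarith
  have h1 : u⁻¹ * v ≤ u⁻¹ * (c * u) := mul_le_mul_of_nonneg_left h (inv_nonneg.2 hu.le)
  have h2 : u⁻¹ * (c * u) = c := by field_simp
  rw [h2] at h1
  calc u⁻¹ = u⁻¹ * v * v⁻¹ := by field_simp
  _ ≤ c * v⁻¹ := mul_le_mul_of_nonneg_right h1 (inv_nonneg.2 hv.le)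

private lemma aux_prod_bound_half {s a b t : ℝ} (hs : 0 ≤ s) (ha : 1 ≤ a) (hb : 1 ≤ b)
    (ht : 1 ≤ t) (htab : t ≤ a + b) (hab : a ≤ b) :
    a ^ (-s) * b ^ (-s) ≤ 2 ^ s * t ^ (-s) * (a ^ (-s) + b ^ (-s)) := by
  have ha0 : (0:ℝ) < a := by linarith
  have hb0 : (0:ℝ) < b := by linarith
  have ht0 : (0:ℝ) < t := by linarith
  have hbs : 0 < b ^ s := Real.rpow_pos_of_pos hb0 _
  have hts : 0 < t ^ s := Real.rpow_pos_of_pos ht0 _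
  have has : 0 < a ^ (-s) := Real.rpow_pos_of_pos ha0 _
  have hbns : 0 ≤ b ^ (-s) := (Real.rpow_pos_of_pos hb0 _).le
  have ht2 : t ^ s ≤ 2 ^ s * b ^ s := by
    calc t ^ s ≤ (2 * b) ^ s := Real.rpow_le_rpow ht0.le (by linarith) hs
    _ = 2 ^ s * b ^ s := Real.mul_rpow (by norm_num) hb0.le
  have key : b ^ (-s) ≤ 2 ^ s * t ^ (-s) := by
    rw [Real.rpow_neg hb0.le, Real.rpow_neg ht0.le]
    exact inv_le_mul_inv' hbs hts ht2
  nlinarith [mul_le_mul_of_nonneg_left key has.le]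

private lemma aux_prod_bound {s a b t : ℝ} (hs : 0 ≤ s) (ha : 1 ≤ a) (hb : 1 ≤ b)
    (ht : 1 ≤ t) (htab : t ≤ a + b) :
    a ^ (-s) * b ^ (-s) ≤ 2 ^ s * t ^ (-s) * (a ^ (-s) + b ^ (-s)) := by
  rcases le_total a b with h | h
  · exact aux_prod_bound_half hs ha hb ht htab h
  · have := aux_prod_bound_half hs hb ha ht (by linarith) h
    linarith [this]

private lemma exists_pointwise_bound {m : ℕ} {f : EuclideanSpace ℝ (Fin m) → ℂ}
    (hf : Continuous f) {C s : ℝ} (hs : 0 < s)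
    (hdecay : ∀ x, ‖x‖ ^ s * ‖f x‖ ≤ C) :
    ∃ D : ℝ, 0 ≤ D ∧ ∀ x, ‖f x‖ ≤ D * (1 + ‖x‖) ^ (-s) := by
  obtain ⟨M, hM⟩ := (isCompact_closedBall (0 : EuclideanSpace ℝ (Fin m)) 1)
    |>.exists_bound_of_continuousOn hf.continuousOn
  refine ⟨(max C 0 + max M 0) * 2 ^ s, by positivity, fun x => ?_⟩
  have hx0 : (0:ℝ) < 1 + ‖x‖ := by positivity
  have h2s : (0:ℝ) < 2 ^ s := Real.rpow_pos_of_pos (by norm_num) _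
  have hxs' : 0 < (1 + ‖x‖) ^ s := Real.rpow_pos_of_pos hx0 _
  rcases le_or_gt ‖x‖ 1 with h | h
  · have hfx : ‖f x‖ ≤ max M 0 := le_trans
      (hM x (by simpa [mem_closedBall, dist_zero_right] using h)) (le_max_left _ _)
    have hbase : (1 + ‖x‖) ^ s ≤ 2 ^ s := Real.rpow_le_rpow hx0.le (by linarith) hs.le
    have h2 : (1:ℝ) ≤ 2 ^ s * ((1 + ‖x‖) ^ s)⁻¹ := by
      rw [← div_eq_mul_inv, le_div_iff₀ hxs']
      simpa using hbase
    rw [Real.rpow_neg hx0.le]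
    calc ‖f x‖ ≤ max M 0 := hfx
    _ = max M 0 * 1 := by ring
    _ ≤ (max C 0 + max M 0) * (2 ^ s * ((1 + ‖x‖) ^ s)⁻¹) := by
        have h0 : (0:ℝ) ≤ max C 0 := le_max_right _ _
        have h1 : (0:ℝ) ≤ max M 0 := le_max_right _ _
        nlinarith
    _ = (max C 0 + max M 0) * 2 ^ s * ((1 + ‖x‖) ^ s)⁻¹ := by ring
  · have hx1 : (0:ℝ) < ‖x‖ := by linarith
    have hxs : 0 < ‖x‖ ^ s := Real.rpow_pos_of_pos hx1 _
    have hfx : ‖f x‖ ≤ C * (‖x‖ ^ s)⁻¹ := by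
      rw [← div_eq_mul_inv, le_div_iff₀ hxs, mul_comm]
      exact hdecay x
    have hbase : (1 + ‖x‖) ^ s ≤ 2 ^ s * ‖x‖ ^ s := by
      calc (1 + ‖x‖) ^ s ≤ (2 * ‖x‖) ^ s := Real.rpow_le_rpow hx0.le (by linarith) hs.le
      _ = 2 ^ s * ‖x‖ ^ s := Real.mul_rpow (by norm_num) hx1.le
    have hinv : (‖x‖ ^ s)⁻¹ ≤ 2 ^ s * ((1 + ‖x‖) ^ s)⁻¹ := inv_le_mul_inv' hxs hxs' hbase
    rw [Real.rpow_neg hx0.le]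
    have hC0 : C ≤ max C 0 := le_max_left _ _
    have hCnn : (0:ℝ) ≤ C := le_trans (by positivity) (hdecay x)
    calc ‖f x‖ ≤ C * (‖x‖ ^ s)⁻¹ := hfx
    _ ≤ C * (2 ^ s * ((1 + ‖x‖) ^ s)⁻¹) := mul_le_mul_of_nonneg_left hinv hCnn
    _ ≤ (max C 0 + max M 0) * 2 ^ s * ((1 + ‖x‖) ^ s)⁻¹ := by
        have h1 : (0:ℝ) ≤ max M 0 := le_max_right _ _
        nlinarith [mul_le_mul_of_nonneg_right (mul_le_mul_of_nonneg_right
          (show C ≤ max C 0 + max M 0 by linarith) h2s.le) (inv_nonneg.2 hxs'.le)]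

private lemma integrable_aux {m : ℕ} {s : ℝ} (hm : (m:ℝ) < s) :
    Integrable (fun u : EuclideanSpace ℝ (Fin m) => (1 + ‖u‖) ^ (-s)) := by
  apply integrable_one_add_norm
  rwa [finrank_euclideanSpace_fin]

private lemma conv_bound {m : ℕ} {f : EuclideanSpace ℝ (Fin m) → ℂ} {D s : ℝ}
    (hm : (m:ℝ) < s) (hD : 0 ≤ D)
    (hfb : ∀ x, ‖f x‖ ≤ D * (1 + ‖x‖) ^ (-s)) (y : EuclideanSpace ℝ (Fin m)) :
    (∫ u, ‖f u‖ * ‖f (u - y)‖) ≤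
      (D ^ 2 * 2 ^ s * (2 * ∫ u : EuclideanSpace ℝ (Fin m), (1 + ‖u‖) ^ (-s))) *
        (1 + ‖y‖) ^ (-s) := by
  have hs : 0 < s := lt_of_le_of_lt (Nat.cast_nonneg m) hm
  have hint := integrable_aux (m := m) hm
  have hint2 : Integrable (fun u : EuclideanSpace ℝ (Fin m) => (1 + ‖u - y‖) ^ (-s)) :=
    hint.comp_sub_right y
  set B : EuclideanSpace ℝ (Fin m) → ℝ := fun u =>
    (D ^ 2 * 2 ^ s * (1 + ‖y‖) ^ (-s)) * ((1 + ‖u‖) ^ (-s) + (1 + ‖u - y‖) ^ (-s)) with hB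
  have hBint : Integrable B := (hint.add hint2).const_mul _
  have hptwise : ∀ u, ‖f u‖ * ‖f (u - y)‖ ≤ B u := by
    intro u
    have h1 := hfb u
    have h2 := hfb (u - y)
    have hprod : ‖f u‖ * ‖f (u - y)‖ ≤
        D ^ 2 * ((1 + ‖u‖) ^ (-s) * (1 + ‖u - y‖) ^ (-s)) := by
      have := mul_le_mul h1 h2 (norm_nonneg _)
        (by positivity)
      calc ‖f u‖ * ‖f (u - y)‖ ≤ (D * (1 + ‖u‖) ^ (-s)) * (D * (1 + ‖u - y‖) ^ (-s)) := this
      _ = D ^ 2 * ((1 + ‖u‖) ^ (-s) * (1 + ‖u - y‖) ^ (-s)) := by ring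
    have htab : 1 + ‖y‖ ≤ (1 + ‖u‖) + (1 + ‖u - y‖) := by
      have : ‖y‖ ≤ ‖u‖ + ‖u - y‖ := by
        have h := norm_sub_le u (u - y)
        rwa [sub_sub_cancel] at h
      linarith
    have hkey := aux_prod_bound (s := s) hs.le (by linarith [norm_nonneg u])
      (by linarith [norm_nonneg (u - y)]) (by linarith [norm_nonneg y]) htab
    calc ‖f u‖ * ‖f (u - y)‖ ≤ D ^ 2 * ((1 + ‖u‖) ^ (-s) * (1 + ‖u - y‖) ^ (-s)) := hprod
    _ ≤ D ^ 2 * (2 ^ s * (1 + ‖y‖) ^ (-s) * ((1 + ‖u‖) ^ (-s) + (1 + ‖u - y‖) ^ (-s))) :=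
        mul_le_mul_of_nonneg_left hkey (by positivity)
    _ = B u := by rw [hB]; ring
  have hmono : (∫ u, ‖f u‖ * ‖f (u - y)‖) ≤ ∫ u, B u :=
    integral_mono_of_nonneg (Filter.Eventually.of_forall fun u => by positivity)
      hBint (Filter.Eventually.of_forall hptwise)
  have hBval : (∫ u, B u) =
      (D ^ 2 * 2 ^ s * (2 * ∫ u : EuclideanSpace ℝ (Fin m), (1 + ‖u‖) ^ (-s))) *
        (1 + ‖y‖) ^ (-s) := by
    rw [hB]
    rw [integral_const_mul, integral_add hint hint2]
    rw [show (∫ u : EuclideanSpace ℝ (Fin m), (1 + ‖u - y‖) ^ (-s)) =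
      ∫ u : EuclideanSpace ℝ (Fin m), (1 + ‖u‖) ^ (-s) from
      integral_sub_right_eq_self (fun u : EuclideanSpace ℝ (Fin m) => (1 + ‖u‖) ^ (-s)) y]
    ring
  linarith [hmono, hBval.le, hBval.ge]

private lemma summable_of_separated {m : ℕ} {ι : Type*} {y : ι → EuclideanSpace ℝ (Fin m)}
    {δ s : ℝ} (hδ : 0 < δ) (hsep : ∀ i j : ι, i ≠ j → δ ≤ dist (y i) (y j))
    (hm : (m:ℝ) < s) :
    Summable fun i => (1 + ‖y i‖) ^ (-s) := by
  have hs : 0 < s := lt_of_le_of_lt (Nat.cast_nonneg m) hm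
  set r := δ / 2 with hrdef
  have hr0 : 0 < r := by positivity
  have hint := integrable_aux (m := m) hm
  set J := ∫ u : EuclideanSpace ℝ (Fin m), (1 + ‖u‖) ^ (-s) with hJ
  set V := (volume (ball (0 : EuclideanSpace ℝ (Fin m)) r)).toReal with hV
  have hV0 : 0 < V := by
    rw [hV]
    exact ENNReal.toReal_pos (measure_ball_pos volume _ hr0).ne' measure_ball_lt_top.ne
  have hrs : 0 < (1 + r) ^ s := Real.rpow_pos_of_pos (by linarith) _
  have hperpoint : ∀ i, (1 + ‖y i‖) ^ (-s) ≤
      ((1 + r) ^ s / V) * ∫ x in ball (y i) r, (1 + ‖x‖) ^ (-s) := by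
    intro i
    have hyi : (0:ℝ) < 1 + ‖y i‖ := by positivity
    have hyis : 0 < (1 + ‖y i‖) ^ s := Real.rpow_pos_of_pos hyi _
    set c : ℝ := ((1 + r) ^ s)⁻¹ * (1 + ‖y i‖) ^ (-s) with hc
    have hconst : ∀ x ∈ ball (y i) r, c ≤ (1 + ‖x‖) ^ (-s) := by
      intro x hx
      have hxb : ‖x‖ ≤ ‖y i‖ + r := by
        have h1 : ‖x - y i‖ < r := by rwa [mem_ball, dist_eq_norm] at hx
        have h2 : ‖x‖ ≤ ‖y i‖ + ‖x - y i‖ := by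
          calc ‖x‖ = ‖y i + (x - y i)‖ := by rw [add_sub_cancel]
          _ ≤ ‖y i‖ + ‖x - y i‖ := norm_add_le _ _
        linarith
      have hx0 : (0:ℝ) < 1 + ‖x‖ := by positivity
      have hxs : 0 < (1 + ‖x‖) ^ s := Real.rpow_pos_of_pos hx0 _
      have hbase : (1 + ‖x‖) ^ s ≤ (1 + r) ^ s * (1 + ‖y i‖) ^ s := by
        calc (1 + ‖x‖) ^ s ≤ ((1 + r) * (1 + ‖y i‖)) ^ s := by
              apply Real.rpow_le_rpow hx0.le _ hs.le
              nlinarith [norm_nonneg (y i)]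
        _ = (1 + r) ^ s * (1 + ‖y i‖) ^ s := Real.mul_rpow (by linarith) (by positivity)
      rw [hc, Real.rpow_neg hx0.le, Real.rpow_neg hyi.le]
      calc ((1 + r) ^ s)⁻¹ * ((1 + ‖y i‖) ^ s)⁻¹ = ((1 + r) ^ s * (1 + ‖y i‖) ^ s)⁻¹ := by
            rw [mul_inv]
      _ ≤ ((1 + ‖x‖) ^ s)⁻¹ := by
            apply inv_anti₀ hxs hbase
    have hball := setIntegral_ge_of_const_le (μ := volume) measurableSet_ball
      measure_ball_lt_top.ne hconst hint.integrableOn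
    rw [measureReal_def, Measure.addHaar_ball_center volume (y i) r, smul_eq_mul, mul_comm] at hball
    have hballV : c * V ≤ ∫ x in ball (y i) r, (1 + ‖x‖) ^ (-s) := hball
    have heq : (1 + ‖y i‖) ^ (-s) = ((1 + r) ^ s / V) * (c * V) := by
      rw [hc]; field_simp
    rw [heq]
    exact mul_le_mul_of_nonneg_left hballV (by positivity)
  apply summable_of_sum_le (c := ((1 + r) ^ s / V) * J)
  · intro i
    positivity
  · intro T
    have hdisj : (T : Set ι).Pairwise (Function.onFun Disjoint fun i => ball (y i) r) := by
      intro i _ j _ hij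
      apply ball_disjoint_ball
      have := hsep i j hij
      rw [hrdef]; linarith
    have hsum : ∑ i ∈ T, ∫ x in ball (y i) r, (1 + ‖x‖) ^ (-s) =
        ∫ x in ⋃ i ∈ T, ball (y i) r, (1 + ‖x‖) ^ (-s) :=
      (integral_biUnion_finset T (fun i _ => measurableSet_ball) hdisj
        (fun i _ => hint.integrableOn)).symm
    have hle : (∫ x in ⋃ i ∈ T, ball (y i) r, (1 + ‖x‖) ^ (-s)) ≤ J :=
      setIntegral_le_integral hint (Filter.Eventually.of_forall fun x => by positivity)
    calc ∑ i ∈ T, (1 + ‖y i‖) ^ (-s)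
        ≤ ∑ i ∈ T, ((1 + r) ^ s / V) * ∫ x in ball (y i) r, (1 + ‖x‖) ^ (-s) :=
          Finset.sum_le_sum fun i _ => hperpoint i
    _ = ((1 + r) ^ s / V) * ∑ i ∈ T, ∫ x in ball (y i) r, (1 + ‖x‖) ^ (-s) := by
          rw [Finset.mul_sum]
    _ ≤ ((1 + r) ^ s / V) * J := by
          rw [hsum]
          exact mul_le_mul_of_nonneg_left hle (by positivity)


/-- the measure γ_{|ω|} = ∑_{z∈L} |η|(z) δ_z, with
|η|(z) = (1/|det L̃|) ∫ |f(u)||f(u−z*)| du, is locally finite: for every compact K,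
∑_{z ∈ L ∩ K} |η|(z) < ∞ (i.e. the family is summable). -/
theorem absolute_autocorrelation_locally_finite (d m : ℕ)
    (L : Submodule ℤ (EuclideanSpace ℝ (Fin d) × EuclideanSpace ℝ (Fin m)))
    [DiscreteTopology L] [IsZLattice ℝ L]
    (hinj1 : Set.InjOn Prod.fst (L : Set (EuclideanSpace ℝ (Fin d) × EuclideanSpace ℝ (Fin m))))
    (hdense1 : Dense (physL d m L))
    (hinj2 : Set.InjOn Prod.snd (L : Set (EuclideanSpace ℝ (Fin d) × EuclideanSpace ℝ (Fin m))))
    (hdense2 : Dense (Prod.snd '' (L : Set (EuclideanSpace ℝ (Fin d) × EuclideanSpace ℝ (Fin m)))))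
    (star : EuclideanSpace ℝ (Fin d) → EuclideanSpace ℝ (Fin m))
    (hstar : ∀ p ∈ L, star (Prod.fst p) = Prod.snd p)
    (f : EuclideanSpace ℝ (Fin m) → ℂ) (hf : Continuous f)
    (C α : ℝ) (hC : 0 < C) (hα : 0 < α)
    (hdecay : ∀ x : EuclideanSpace ℝ (Fin m), ‖x‖ ^ ((m : ℝ) + 1 + α) * ‖f x‖ ≤ C)
    (K : Set (EuclideanSpace ℝ (Fin d))) (hK : IsCompact K) :
    Summable fun z : ((physL d m L ∩ K : Set (EuclideanSpace ℝ (Fin d)))) =>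
      (ZLattice.covolume L volume)⁻¹ *
        ∫ u, ‖f u‖ * ‖f (u - star (z : EuclideanSpace ℝ (Fin d)))‖ := by
  classical
  set s : ℝ := (m : ℝ) + 1 + α with hsdef
  have hm : (m : ℝ) < s := by rw [hsdef]; linarith
  have hs0 : (0:ℝ) < s := lt_of_le_of_lt (Nat.cast_nonneg m) hm
  obtain ⟨D, hD, hfb⟩ := exists_pointwise_bound hf hs0 hdecay
  -- choose lattice points above each point of physL ∩ K
  have hmem : ∀ z : (physL d m L ∩ K : Set (EuclideanSpace ℝ (Fin d))),
      ∃ q : EuclideanSpace ℝ (Fin d) × EuclideanSpace ℝ (Fin m),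
        q ∈ (L : Set (EuclideanSpace ℝ (Fin d) × EuclideanSpace ℝ (Fin m))) ∧
          Prod.fst q = (z : EuclideanSpace ℝ (Fin d)) := fun z => z.2.1
  choose p hpL hpfst using hmem
  have hstarz : ∀ z : (physL d m L ∩ K : Set (EuclideanSpace ℝ (Fin d))),
      star (z : EuclideanSpace ℝ (Fin d)) = (p z).2 := fun z => by
    rw [← hpfst z]; exact hstar (p z) (hpL z)
  -- K is bounded
  obtain ⟨R, hR⟩ := hK.isBounded.subset_closedBall 0
  -- the lattice is closed
  have hLclosed : IsClosed
      (L : Set (EuclideanSpace ℝ (Fin d) × EuclideanSpace ℝ (Fin m))) := by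
    have : DiscreteTopology L.toAddSubgroup := ‹DiscreteTopology L›
    exact Submodule.coe_toAddSubgroup L ▸
      AddSubgroup.isClosed_of_discrete (H := L.toAddSubgroup)
  -- finite set of small lattice vectors
  set F : Set (EuclideanSpace ℝ (Fin d) × EuclideanSpace ℝ (Fin m)) :=
    (L : Set (EuclideanSpace ℝ (Fin d) × EuclideanSpace ℝ (Fin m))) ∩
      (Metric.closedBall 0 (2 * R) ×ˢ Metric.closedBall 0 1) with hFdef
  have hFcompact : IsCompact F :=
    ((isCompact_closedBall _ _).prod (isCompact_closedBall _ _)).inter_left hLclosed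
  have hFdisc : DiscreteTopology F :=
    DiscreteTopology.of_subset
      (show DiscreteTopology
        ((L : Set (EuclideanSpace ℝ (Fin d) × EuclideanSpace ℝ (Fin m))) : Type _) from
        ‹DiscreteTopology L›) Set.inter_subset_left
  have hFfin : F.Finite := hFcompact.finite (isDiscrete_iff_discreteTopology.mpr hFdisc)
  have hsnd : ∀ q ∈ (L : Set (EuclideanSpace ℝ (Fin d) × EuclideanSpace ℝ (Fin m))),
      q.2 = 0 → q = 0 := by
    intro q hq h2
    exact hinj2 hq L.zero_mem (by simp [h2])
  set G : Finset ℝ :=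
    insert 1 ((hFfin.toFinset.filter (fun q => q ≠ 0)).image fun q => ‖q.2‖) with hGdef
  have hGne : G.Nonempty := ⟨1, Finset.mem_insert_self _ _⟩
  set δ : ℝ := G.min' hGne with hδdef
  have hδ1 : δ ≤ 1 := Finset.min'_le _ _ (Finset.mem_insert_self _ _)
  have hδpos : 0 < δ := by
    have hmem' := G.min'_mem hGne
    rcases Finset.mem_insert.mp hmem' with h | h
    · rw [hδdef, h]; norm_num
    · obtain ⟨q, hq, hq2⟩ := Finset.mem_image.mp h
      rw [Finset.mem_filter, Set.Finite.mem_toFinset] at hq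
      have hq2ne : q.2 ≠ 0 := fun h0 => hq.2 (hsnd q hq.1.1 h0)
      rw [hδdef, ← hq2]
      exact norm_pos_iff.mpr hq2ne
  have hδle : ∀ q ∈ F, q ≠ 0 → δ ≤ ‖q.2‖ := fun q hq h0 =>
    Finset.min'_le _ _ (Finset.mem_insert_of_mem (Finset.mem_image.mpr
      ⟨q, Finset.mem_filter.mpr ⟨hFfin.mem_toFinset.mpr hq, h0⟩, rfl⟩))
  -- separation of star images
  have hsep : ∀ z w : (physL d m L ∩ K : Set (EuclideanSpace ℝ (Fin d))), z ≠ w →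
      δ ≤ dist (star (z : EuclideanSpace ℝ (Fin d)))
        (star (w : EuclideanSpace ℝ (Fin d))) := by
    intro z w hzw
    have hq : p z - p w ∈ L := sub_mem (hpL z) (hpL w)
    have hqne : p z - p w ≠ 0 := by
      intro h0
      apply hzw
      have hpe : p z = p w := sub_eq_zero.mp h0
      exact Subtype.ext (by rw [← hpfst z, ← hpfst w, hpe])
    have hd : dist (star (z : EuclideanSpace ℝ (Fin d)))
        (star (w : EuclideanSpace ℝ (Fin d))) = ‖(p z - p w).2‖ := by
      rw [hstarz z, hstarz w, dist_eq_norm, Prod.snd_sub]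
    rw [hd]
    by_contra hlt
    push_neg at hlt
    have hmemF : p z - p w ∈ F := by
      refine Set.mem_inter hq (Set.mem_prod.mpr ⟨?_, ?_⟩)
      · rw [Prod.fst_sub, mem_closedBall_zero_iff, hpfst z, hpfst w]
        have hz : ‖(z : EuclideanSpace ℝ (Fin d))‖ ≤ R := by
          have := hR z.2.2; rwa [mem_closedBall_zero_iff] at this
        have hw : ‖(w : EuclideanSpace ℝ (Fin d))‖ ≤ R := by
          have := hR w.2.2; rwa [mem_closedBall_zero_iff] at this
        calc ‖(z : EuclideanSpace ℝ (Fin d)) - (w : EuclideanSpace ℝ (Fin d))‖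
            ≤ ‖(z : EuclideanSpace ℝ (Fin d))‖ + ‖(w : EuclideanSpace ℝ (Fin d))‖ :=
              norm_sub_le _ _
        _ ≤ 2 * R := by linarith
      · rw [mem_closedBall_zero_iff]
        linarith
    exact absurd (hδle _ hmemF hqne) (by linarith)
  have hsum0 : Summable fun z : (physL d m L ∩ K : Set (EuclideanSpace ℝ (Fin d))) =>
      (1 + ‖star (z : EuclideanSpace ℝ (Fin d))‖) ^ (-s) :=
    summable_of_separated hδpos hsep hm
  have hsum1 := hsum0.mul_left
    (D ^ 2 * 2 ^ s * (2 * ∫ u : EuclideanSpace ℝ (Fin m), (1 + ‖u‖) ^ (-s)))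
  have hsum2 : Summable fun z : (physL d m L ∩ K : Set (EuclideanSpace ℝ (Fin d))) =>
      ∫ u, ‖f u‖ * ‖f (u - star (z : EuclideanSpace ℝ (Fin d)))‖ :=
    Summable.of_nonneg_of_le (fun z => integral_nonneg fun u => by positivity)
      (fun z => conv_bound hm hD hfb _) hsum1
  exact hsum2.mul_left _
end

section
/- Duality of the cut-and-project scheme: let L̃ ⊂ ℝ^d × ℝ^m be a lattice such that π₁|_{L̃} is injective with dense image and π₂|_{L̃} is injective with dense image. Then the dual lattice (L̃)* = {y : y·x ∈ ℤ for all x ∈ L̃} has the same properties: π₁|_{(L̃)*} is injective with image L* dense in ℝ^d, and π₂|_{(L̃)*} is injective with dense image in ℝ^m. -/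
open scoped RealInnerProductSpace
open Module Filter

lemma exists_line_of_small {E : Type} [NormedAddCommGroup E] [InnerProductSpace ℝ E]
    [FiniteDimensional ℝ E] (H : AddSubgroup E) (hcl : IsClosed (H : Set E))
    (hsmall : ∀ ε : ℝ, 0 < ε → ∃ h ∈ H, h ≠ 0 ∧ ‖h‖ < ε) :
    ∃ v : E, v ≠ 0 ∧ ∀ t : ℝ, t • v ∈ H := by
  have hseq : ∀ k : ℕ, ∃ h : E, h ∈ H ∧ h ≠ 0 ∧ ‖h‖ < 1/(k+1) :=
    fun k => by obtain ⟨h, h1, h2, h3⟩ := hsmall (1/(k+1)) (by positivity); exact ⟨h, h1, h2, h3⟩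
  choose h hmem hne hnorm using hseq
  set w : ℕ → E := fun k => ‖h k‖⁻¹ • h k with hw
  have hwmem : ∀ k, w k ∈ Metric.sphere (0:E) 1 := by
    intro k
    simp [hw, norm_smul, inv_mul_cancel₀ (norm_ne_zero_iff.2 (hne k))]
  obtain ⟨v, hv, φ, hφ, hconv⟩ := (isCompact_sphere (0:E) 1).tendsto_subseq hwmem
  have hvnorm : ‖v‖ = 1 := by simpa using hv
  refine ⟨v, fun h0 => by simp [h0] at hvnorm, fun t => ?_⟩
  have hr0 : ∀ k, (0:ℝ) < ‖h (φ k)‖ := fun k => norm_pos_iff.2 (hne _)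
  have hrlim : Tendsto (fun k => ‖h (φ k)‖) atTop (nhds 0) := by
    refine squeeze_zero (fun k => (hr0 k).le) (fun k => ?_) tendsto_one_div_add_atTop_nhds_zero_nat
    refine le_trans (hnorm (φ k)).le ?_
    apply one_div_le_one_div_of_le (by positivity)
    have : (k:ℝ) ≤ φ k := by exact_mod_cast hφ.le_apply
    linarith
  set c : ℕ → ℝ := fun k => ((⌊t / ‖h (φ k)‖⌋ : ℤ) : ℝ) * ‖h (φ k)‖ with hc
  have hclim : Tendsto c atTop (nhds t) := by
    rw [tendsto_iff_dist_tendsto_zero]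
    refine squeeze_zero (fun k => dist_nonneg) (fun k => ?_) hrlim
    have hr := hr0 k
    set r := ‖h (φ k)‖
    set x := t / r with hx
    have hxr : x * r = t := div_mul_cancel₀ t hr.ne'
    rw [Real.dist_eq]
    have he : c k - t = (((⌊x⌋ : ℤ) : ℝ) - x) * r := by rw [sub_mul, hxr, hc]
    rw [he, abs_mul, abs_of_pos hr]
    have h1 : |((⌊x⌋ : ℤ) : ℝ) - x| ≤ 1 := by
      rw [abs_sub_comm, abs_of_nonneg (by linarith [Int.floor_le x])]
      linarith [Int.lt_floor_add_one x]
    nlinarith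
  have hlim : Tendsto (fun k => c k • w (φ k)) atTop (nhds (t • v)) := hclim.smul hconv
  have hmem' : ∀ k, c k • w (φ k) ∈ H := by
    intro k
    have he : c k • w (φ k) = (⌊t / ‖h (φ k)‖⌋ : ℤ) • h (φ k) := by
      rw [hc, hw]
      simp only [smul_smul]
      rw [mul_assoc, mul_inv_cancel₀ (hr0 k).ne', mul_one, Int.cast_smul_eq_zsmul]
    rw [he]
    exact AddSubgroup.zsmul_mem H (hmem _) _
  exact hcl.mem_of_tendsto hlim (Eventually.of_forall hmem')


lemma exists_dual_of_discrete {E : Type} [NormedAddCommGroup E] [InnerProductSpace ℝ E]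
    [FiniteDimensional ℝ E] (H : AddSubgroup E)
    (hne : (H : Set E) ≠ Set.univ)
    (hd : ∃ ε : ℝ, 0 < ε ∧ ∀ h ∈ H, ‖h‖ < ε → h = 0) :
    ∃ u : E, u ≠ 0 ∧ ∀ x ∈ H, ∃ k : ℤ, ⟪u, x⟫ = (k : ℝ) := by
  obtain ⟨ε, hε, hεH⟩ := hd
  by_cases hspan : Submodule.span ℝ (H : Set E) = ⊤
  · -- full lattice case
    set L' : Submodule ℤ E := AddSubgroup.toIntSubmodule H with hL'
    have hL'mem : ∀ x : E, x ∈ L' ↔ x ∈ H := fun x => Iff.rfl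
    have : DiscreteTopology L' := by
      rw [discreteTopology_iff_isOpen_singleton_zero]
      have heq : ({(0 : L')} : Set L') = (Subtype.val) ⁻¹' (Metric.ball (0:E) ε) := by
        ext x
        simp only [Set.mem_singleton_iff, Set.mem_preimage, Metric.mem_ball, dist_zero_right]
        constructor
        · rintro rfl; simpa using hε
        · intro hx
          exact Subtype.ext (hεH x x.2 hx)
      rw [heq]
      exact Metric.isOpen_ball.preimage continuous_subtype_val
    have : IsZLattice ℝ L' := ⟨hspan⟩
    have : Module.Finite ℤ L' := ZLattice.module_finite ℝ L'
    have : Module.Free ℤ L' := ZLattice.module_free ℝ L'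
    set b := Module.Free.chooseBasis ℤ L' with hb
    set bb := b.ofZLatticeBasis ℝ L' with hbb
    have hι : Nonempty (Module.Free.ChooseBasisIndex ℤ L') := by
      by_contra hempty
      rw [not_nonempty_iff] at hempty
      have h1 := bb.span_eq
      rw [Set.range_eq_empty, Submodule.span_empty] at h1
      apply hne
      apply Set.eq_univ_of_forall
      intro x
      have hx : x ∈ (⊥ : Submodule ℝ E) := h1 ▸ Submodule.mem_top
      rw [Submodule.mem_bot] at hx
      rw [hx]
      exact H.zero_mem
    obtain ⟨i₀⟩ := hι
    set u := (InnerProductSpace.toDual ℝ E).symm ((bb.coord i₀).toContinuousLinearMap) with hu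
    have huval : ∀ x : E, ⟪u, x⟫ = bb.coord i₀ x := by
      intro x
      rw [hu, InnerProductSpace.toDual_symm_apply]
      rfl
    refine ⟨u, ?_, ?_⟩
    · intro h0
      have := huval (bb i₀)
      rw [h0, inner_zero_left, Basis.coord_apply, Basis.repr_self] at this
      simp at this
    · intro x hx
      refine ⟨b.repr ⟨x, hx⟩ i₀, ?_⟩
      rw [huval, Basis.coord_apply]
      have := b.ofZLatticeBasis_repr_apply ℝ (L := L') ⟨x, hx⟩ i₀
      rw [← hbb] at this
      exact this
  · -- span is proper: orthogonal vector
    set W := Submodule.span ℝ (H : Set E) with hW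
    have : Wᗮ ≠ ⊥ := by
      intro hbot
      exact hspan (Submodule.orthogonal_eq_bot_iff.mp hbot)
    obtain ⟨u, huW, hu0⟩ := Submodule.exists_mem_ne_zero_of_ne_bot this
    refine ⟨u, hu0, fun x hx => ⟨0, ?_⟩⟩
    have hxW : x ∈ W := Submodule.subset_span hx
    rw [Submodule.mem_orthogonal] at huW
    simp [real_inner_comm u x ▸ huW x hxW]


lemma exists_dual_of_not_dense : ∀ (n : ℕ) (E : Type) [NormedAddCommGroup E]
    [InnerProductSpace ℝ E] [FiniteDimensional ℝ E],
    Module.finrank ℝ E ≤ n → ∀ (H : AddSubgroup E), ¬ Dense (H : Set E) →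
    ∃ u : E, u ≠ 0 ∧ ∀ x ∈ H, ∃ k : ℤ, ⟪u, x⟫ = (k : ℝ) := by
  intro n
  induction n with
  | zero =>
    intro E _ _ _ hrank H hH
    exfalso
    have hsub : Subsingleton E := Module.finrank_zero_iff.mp (Nat.le_zero.mp hrank)
    have : (H : Set E) = Set.univ :=
      Set.eq_univ_of_forall fun x => (Subsingleton.elim (0:E) x) ▸ H.zero_mem
    exact hH (this ▸ dense_univ)
  | succ n ih =>
    intro E _ _ _ hrank H hH
    set Hc := H.topologicalClosure with hHc
    have hclosed : IsClosed (Hc : Set E) := AddSubgroup.isClosed_topologicalClosure H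
    have hsub : (H : Set E) ⊆ (Hc : Set E) := AddSubgroup.le_topologicalClosure H
    have hcne : (Hc : Set E) ≠ Set.univ := by
      intro hcontra
      apply hH
      rw [dense_iff_closure_eq]
      exact hcontra
    suffices hsuff : ∃ u : E, u ≠ 0 ∧ ∀ x ∈ Hc, ∃ k : ℤ, ⟪u, x⟫ = (k : ℝ) by
      obtain ⟨u, h1, h2⟩ := hsuff
      exact ⟨u, h1, fun x hx => h2 x (hsub hx)⟩
    by_cases hsmall : ∀ ε : ℝ, 0 < ε → ∃ h ∈ Hc, h ≠ 0 ∧ ‖h‖ < ε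
    · obtain ⟨v, hv0, hline⟩ := exists_line_of_small Hc hclosed hsmall
      have hvv : ⟪v, v⟫ ≠ 0 := by
        rw [real_inner_self_eq_norm_sq]
        exact pow_ne_zero 2 (norm_ne_zero_iff.mpr hv0)
      set K := (Submodule.span ℝ ({v} : Set E))ᗮ with hK
      set H' : AddSubgroup K := AddSubgroup.comap (K.subtype.toAddMonoidHom) Hc with hH'
      have hH'mem : ∀ x : K, x ∈ H' ↔ (x : E) ∈ Hc := fun x => Iff.rfl
      have hKmem : ∀ x : E, x - (⟪v, x⟫ / ⟪v, v⟫) • v ∈ K := by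
        intro x
        rw [hK, Submodule.mem_orthogonal]
        intro w hw
        obtain ⟨c, rfl⟩ := Submodule.mem_span_singleton.mp hw
        rw [real_inner_smul_left, inner_sub_right, real_inner_smul_right,
          div_mul_cancel₀ _ hvv]
        ring
      have hH'closed : IsClosed (H' : Set K) := hclosed.preimage continuous_subtype_val
      have hH'ne : (H' : Set K) ≠ Set.univ := by
        intro hcontra
        apply hcne
        apply Set.eq_univ_of_forall
        intro x
        have h1 : (⟪v, x⟫ / ⟪v, v⟫) • v ∈ Hc := hline _
        have h2 : x - (⟪v, x⟫ / ⟪v, v⟫) • v ∈ Hc := by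
          have hmem : (⟨x - (⟪v, x⟫ / ⟪v, v⟫) • v, hKmem x⟩ : K) ∈ H' := by
            have : (⟨x - (⟪v, x⟫ / ⟪v, v⟫) • v, hKmem x⟩ : K) ∈ (H' : Set K) := by
              rw [hcontra]; trivial
            exact this
          exact (hH'mem _).mp hmem
        have := Hc.add_mem h1 h2
        rwa [add_sub_cancel] at this
      have hH'notdense : ¬ Dense (H' : Set K) := by
        intro hdense
        exact hH'ne (hH'closed.closure_eq ▸ hdense.closure_eq)
      have hrankK : Module.finrank ℝ K ≤ n := by
        have h1 : Module.finrank ℝ (Submodule.span ℝ ({v} : Set E)) = 1 :=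
          finrank_span_singleton hv0
        have h2 := Submodule.finrank_add_finrank_orthogonal
          (K := Submodule.span ℝ ({v} : Set E)) (E := E) (𝕜 := ℝ)
        have h3 : Module.finrank ℝ K = Module.finrank ℝ (Submodule.span ℝ ({v} : Set E))ᗮ := rfl
        omega
      obtain ⟨u', hu'0, hu'⟩ := ih K hrankK H' hH'notdense
      have hu0 : (u' : E) ≠ 0 := fun h0 => hu'0 (Subtype.ext h0)
      refine ⟨(u' : E), hu0, ?_⟩
      intro x hx
      set t := ⟪v, x⟫ / ⟪v, v⟫ with ht
      have hkmem : x - t • v ∈ Hc := Hc.sub_mem hx (hline t)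
      obtain ⟨k, hk2⟩ := hu' ⟨x - t • v, hKmem x⟩ ((hH'mem _).mpr hkmem)
      refine ⟨k, ?_⟩
      have huv : ⟪(u' : E), v⟫ = 0 := by
        have hmem : (u' : E) ∈ (Submodule.span ℝ ({v} : Set E))ᗮ := u'.2
        rw [Submodule.mem_orthogonal] at hmem
        rw [real_inner_comm]
        exact hmem v (Submodule.mem_span_singleton_self v)
      have hsplit : ⟪(u' : E), x⟫ = ⟪(u' : E), x - t • v⟫ + t * ⟪(u' : E), v⟫ := by
        rw [inner_sub_right, real_inner_smul_right]; ring
      rw [hsplit, huv, mul_zero, add_zero]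
      rw [show ⟪(u' : E), x - t • v⟫ = ⟪u', (⟨x - t • v, hKmem x⟩ : K)⟫ from rfl]
      exact hk2
    · push_neg at hsmall
      obtain ⟨ε, hε, hεH⟩ := hsmall
      refine exists_dual_of_discrete Hc hcne ⟨ε, hε, fun h hh hnorm => ?_⟩
      by_contra h0
      have := hεH h hh h0
      linarith


/-- The dual lattice of L̃ in ℝ^d × ℝ^m, w.r.t. the Euclidean pairing of the product. -/
def dualL (d m : ℕ) (L : Submodule ℤ (EuclideanSpace ℝ (Fin d) × EuclideanSpace ℝ (Fin m))) :
    Set (EuclideanSpace ℝ (Fin d) × EuclideanSpace ℝ (Fin m)) :=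
  {y | ∀ x ∈ L, ∃ n : ℤ, ⟪y.1, x.1⟫ + ⟪y.2, x.2⟫ = (n : ℝ)}

/-- Duality of the cut-and-project scheme: if both projections are
injective on the lattice L̃ with dense images, then the same holds for the dual
lattice (L̃)*. -/
theorem cut_and_project_duality (d m : ℕ)
    (L : Submodule ℤ (EuclideanSpace ℝ (Fin d) × EuclideanSpace ℝ (Fin m)))
    [DiscreteTopology L] [IsZLattice ℝ L]
    (hinj1 : Set.InjOn Prod.fst (L : Set (EuclideanSpace ℝ (Fin d) × EuclideanSpace ℝ (Fin m))))
    (hdense1 : Dense (Prod.fst '' (L : Set (EuclideanSpace ℝ (Fin d) × EuclideanSpace ℝ (Fin m)))))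
    (hinj2 : Set.InjOn Prod.snd (L : Set (EuclideanSpace ℝ (Fin d) × EuclideanSpace ℝ (Fin m))))
    (hdense2 : Dense (Prod.snd '' (L : Set (EuclideanSpace ℝ (Fin d) × EuclideanSpace ℝ (Fin m))))) :
    Set.InjOn Prod.fst (dualL d m L) ∧
    Dense (Prod.fst '' dualL d m L) ∧
    Set.InjOn Prod.snd (dualL d m L) ∧
    Dense (Prod.snd '' dualL d m L) := by
  classical
  set E₀ := EuclideanSpace ℝ (Fin d) × EuclideanSpace ℝ (Fin m) with hE₀
  -- the bilinear pairing
  set B : LinearMap.BilinForm ℝ E₀ :=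
      ((innerₗ (EuclideanSpace ℝ (Fin d))).compl₁₂ (LinearMap.fst ℝ _ _) (LinearMap.fst ℝ _ _)) +
      ((innerₗ (EuclideanSpace ℝ (Fin m))).compl₁₂ (LinearMap.snd ℝ _ _) (LinearMap.snd ℝ _ _))
    with hB
  have hBapp : ∀ x y : E₀, B x y = ⟪x.1, y.1⟫ + ⟪x.2, y.2⟫ := fun x y => rfl
  have hBsymm : B.IsSymm := by
    rw [LinearMap.BilinForm.isSymm_def]
    intro x y
    simp only [RingHom.id_apply, hBapp]
    rw [real_inner_comm x.1 y.1, real_inner_comm x.2 y.2]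
  have hBnd : B.Nondegenerate := by
    refine (LinearMap.BilinForm.isSymm_iff.mp hBsymm).isRefl.nondegenerate_iff_separatingLeft.mpr ?_
    intro x hx
    have h0 := hx x
    rw [hBapp] at h0
    have n1 : (0:ℝ) ≤ ⟪x.1, x.1⟫ := real_inner_self_nonneg
    have n2 : (0:ℝ) ≤ ⟪x.2, x.2⟫ := real_inner_self_nonneg
    have h1 : ⟪x.1, x.1⟫ = 0 ∧ ⟪x.2, x.2⟫ = 0 := ⟨by linarith, by linarith⟩
    exact Prod.ext (inner_self_eq_zero.mp h1.1) (inner_self_eq_zero.mp h1.2)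
  set D : Submodule ℤ E₀ := B.dualSubmodule L with hD
  have hdualset : dualL d m L = (D : Set E₀) := by
    ext y
    constructor
    · intro hy x hx
      obtain ⟨n, hn⟩ := hy x hx
      exact Submodule.mem_one.mpr ⟨n, by rw [hBapp]; exact_mod_cast hn.symm⟩
    · intro hy x hx
      obtain ⟨n, hn⟩ := Submodule.mem_one.mp (hy x hx)
      exact ⟨n, by rw [hBapp] at hn; exact_mod_cast hn.symm⟩
  -- basis of L and double duality
  have hfin : Module.Finite ℤ L := ZLattice.module_finite ℝ L
  have hfree : Module.Free ℤ L := ZLattice.module_free ℝ L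
  set b := Module.Free.chooseBasis ℤ L with hb
  set bb := b.ofZLatticeBasis ℝ L with hbb
  have hspan : Submodule.span ℤ (Set.range bb) = L := b.ofZLatticeBasis_span ℝ
  have hdd : B.dualSubmodule D = L := by
    rw [hD, ← hspan]
    exact B.dualSubmodule_dualSubmodule_of_basis hBnd hBsymm bb
  -- injectivity parts
  have hinjF : Set.InjOn Prod.fst (dualL d m L) := by
    intro y hy y' hy' heq
    rw [hdualset] at hy hy'
    have hz : y - y' ∈ D := D.sub_mem hy hy'
    have hzd : y - y' ∈ dualL d m L := by rw [hdualset]; exact hz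
    have hz1 : (y - y').1 = 0 := by
      rw [Prod.fst_sub, heq, sub_self]
    by_cases hz2 : (y - y').2 = 0
    · have h0 : y - y' = 0 := Prod.ext hz1 hz2
      exact sub_eq_zero.mp h0
    exfalso
    set z2 := (y - y').2 with hz2def
    have hcont : Continuous fun w : EuclideanSpace ℝ (Fin m) => ⟪z2, w⟫ :=
      continuous_const.inner continuous_id
    have hUopen : IsOpen ((fun w : EuclideanSpace ℝ (Fin m) => ⟪z2, w⟫) ⁻¹' Set.Ioo (0:ℝ) 1) :=
      isOpen_Ioo.preimage hcont
    have hs : (0:ℝ) < ⟪z2, z2⟫ := by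
      rw [real_inner_self_eq_norm_sq]
      exact pow_pos (norm_pos_iff.mpr hz2) 2
    have hUne : ((fun w : EuclideanSpace ℝ (Fin m) => ⟪z2, w⟫) ⁻¹' Set.Ioo (0:ℝ) 1).Nonempty := by
      refine ⟨(2 * ⟪z2, z2⟫)⁻¹ • z2, ?_⟩
      simp only [Set.mem_preimage, real_inner_smul_right, Set.mem_Ioo, inv_mul_eq_div]
      refine ⟨div_pos hs (by linarith), ?_⟩
      rw [div_lt_one (by linarith)]
      linarith
    obtain ⟨w, hwim, hwU⟩ := hdense2.exists_mem_open hUopen hUne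
    obtain ⟨x, hxL, hx2⟩ := hwim
    obtain ⟨n, hn⟩ := hzd x hxL
    rw [hz1, inner_zero_left, zero_add, ← hz2def] at hn
    rw [← hx2] at hwU
    simp only [Set.mem_preimage, Set.mem_Ioo] at hwU
    rw [hn] at hwU
    have h1 : (0:ℤ) < n := by exact_mod_cast hwU.1
    have h2 : (n:ℤ) < 1 := by exact_mod_cast hwU.2
    omega
  have hinjS : Set.InjOn Prod.snd (dualL d m L) := by
    intro y hy y' hy' heq
    rw [hdualset] at hy hy'
    have hz : y - y' ∈ D := D.sub_mem hy hy'
    have hzd : y - y' ∈ dualL d m L := by rw [hdualset]; exact hz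
    have hz2 : (y - y').2 = 0 := by
      rw [Prod.snd_sub, heq, sub_self]
    by_cases hz1 : (y - y').1 = 0
    · have h0 : y - y' = 0 := Prod.ext hz1 hz2
      exact sub_eq_zero.mp h0
    exfalso
    set z1 := (y - y').1 with hz1def
    have hcont : Continuous fun w : EuclideanSpace ℝ (Fin d) => ⟪z1, w⟫ :=
      continuous_const.inner continuous_id
    have hUopen : IsOpen ((fun w : EuclideanSpace ℝ (Fin d) => ⟪z1, w⟫) ⁻¹' Set.Ioo (0:ℝ) 1) :=
      isOpen_Ioo.preimage hcont
    have hs : (0:ℝ) < ⟪z1, z1⟫ := by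
      rw [real_inner_self_eq_norm_sq]
      exact pow_pos (norm_pos_iff.mpr hz1) 2
    have hUne : ((fun w : EuclideanSpace ℝ (Fin d) => ⟪z1, w⟫) ⁻¹' Set.Ioo (0:ℝ) 1).Nonempty := by
      refine ⟨(2 * ⟪z1, z1⟫)⁻¹ • z1, ?_⟩
      simp only [Set.mem_preimage, real_inner_smul_right, Set.mem_Ioo, inv_mul_eq_div]
      refine ⟨div_pos hs (by linarith), ?_⟩
      rw [div_lt_one (by linarith)]
      linarith
    obtain ⟨w, hwim, hwU⟩ := hdense1.exists_mem_open hUopen hUne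
    obtain ⟨x, hxL, hx1⟩ := hwim
    obtain ⟨n, hn⟩ := hzd x hxL
    rw [hz2, inner_zero_left, add_zero, ← hz1def] at hn
    rw [← hx1] at hwU
    simp only [Set.mem_preimage, Set.mem_Ioo] at hwU
    rw [hn] at hwU
    have h1 : (0:ℤ) < n := by exact_mod_cast hwU.1
    have h2 : (n:ℤ) < 1 := by exact_mod_cast hwU.2
    omega
  -- density parts
  have hdenseF : Dense (Prod.fst '' dualL d m L) := by
    by_contra hnd
    set G : AddSubgroup (EuclideanSpace ℝ (Fin d)) :=
      AddSubgroup.map (AddMonoidHom.fst _ _) D.toAddSubgroup with hG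
    have hGset : (G : Set (EuclideanSpace ℝ (Fin d))) = Prod.fst '' dualL d m L := by
      rw [hG, AddSubgroup.coe_map, hdualset]
      rfl
    have hGnd : ¬ Dense (G : Set (EuclideanSpace ℝ (Fin d))) := by rw [hGset]; exact hnd
    obtain ⟨u, hu0, hu⟩ := exists_dual_of_not_dense d (EuclideanSpace ℝ (Fin d))
      (le_of_eq finrank_euclideanSpace_fin) G hGnd
    have hmem : ((u, 0) : E₀) ∈ B.dualSubmodule D := by
      intro y hy
      have hy1 : y.1 ∈ G := ⟨y, hy, rfl⟩
      obtain ⟨k, hk⟩ := hu y.1 hy1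
      refine Submodule.mem_one.mpr ⟨k, ?_⟩
      rw [hBapp]
      show ((k:ℤ):ℝ) = _
      simp only [inner_zero_left, add_zero]
      exact hk.symm
    rw [hdd] at hmem
    have h0 : ((u, 0) : E₀) = 0 := hinj2 hmem L.zero_mem rfl
    exact hu0 (congrArg Prod.fst h0)
  have hdenseS : Dense (Prod.snd '' dualL d m L) := by
    by_contra hnd
    set G : AddSubgroup (EuclideanSpace ℝ (Fin m)) :=
      AddSubgroup.map (AddMonoidHom.snd _ _) D.toAddSubgroup with hG
    have hGset : (G : Set (EuclideanSpace ℝ (Fin m))) = Prod.snd '' dualL d m L := by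
      rw [hG, AddSubgroup.coe_map, hdualset]
      rfl
    have hGnd : ¬ Dense (G : Set (EuclideanSpace ℝ (Fin m))) := by rw [hGset]; exact hnd
    obtain ⟨u, hu0, hu⟩ := exists_dual_of_not_dense m (EuclideanSpace ℝ (Fin m))
      (le_of_eq finrank_euclideanSpace_fin) G hGnd
    have hmem : ((0, u) : E₀) ∈ B.dualSubmodule D := by
      intro y hy
      have hy2 : y.2 ∈ G := ⟨y, hy, rfl⟩
      obtain ⟨k, hk⟩ := hu y.2 hy2
      refine Submodule.mem_one.mpr ⟨k, ?_⟩
      rw [hBapp]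
      show ((k:ℤ):ℝ) = _
      simp only [inner_zero_left, zero_add]
      exact hk.symm
    rw [hdd] at hmem
    have h0 : ((0, u) : E₀) = 0 := hinj1 hmem L.zero_mem rfl
    exact hu0 (congrArg Prod.snd h0)
  exact ⟨hinjF, hdenseF, hinjS, hdenseS⟩
end
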